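/- The Hausdorff dimension of the Cantor set C equals log 3 / log(φ³). -/

import Mathlib

open Set

noncomputable section

/-- The golden ratio `(1+√5)/2`. -/
def gold : ℝ := (1 + Real.sqrt 5) / 2

/-- The Cantor set `C`: sums `Σ a_k φ^(-3k)` with digits `a_k ∈ {0, 4-2φ, 2φ-2}`. -/
def cantorC : Set ℝ :=
  {x | ∃ a : ℕ → ℝ, (∀ k, a k = 0 ∨ a k = 4 - 2 * gold ∨ a k = 2 * gold - 2) ∧
    x = ∑' k : ℕ, a k * (gold ^ (3 * k))⁻¹}

/-- The endpoints of the connected components of `ℝ ∖ C`. -/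
def cantorEndpoints : Set ℝ :=
  {x | ∃ y : ℝ, y ∉ cantorC ∧ x ∈ closure (connectedComponentIn cantorCᶜ y)}

/-- `C♯`: the Cantor set minus the endpoints of complementary components. -/
def cantorCsharp : Set ℝ := cantorC \ cantorEndpoints

open Filter NNReal ENNReal

lemma gold_eq : gold = Real.goldenRatio := rfl
lemma sqrt5_sq : Real.sqrt 5 ^ 2 = 5 := Real.sq_sqrt (by norm_num)
lemma goldLB : (8:ℝ)/5 < gold := by
  have h := sqrt5_sq; have h2 := Real.sqrt_nonneg 5
  unfold gold; nlinarith
lemma goldUB : gold < (5:ℝ)/3 := by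
  have h := sqrt5_sq; have h2 := Real.sqrt_nonneg 5
  unfold gold; nlinarith
lemma goldSq : gold ^ 2 = gold + 1 := gold_eq ▸ Real.goldenRatio_sq
lemma goldPos : 0 < gold := gold_eq ▸ Real.goldenRatio_pos
lemma goldCube : gold ^ 3 = 2 * gold + 1 := by
  have h := goldSq; nlinarith

/-- contraction ratio -/
def rr : ℝ := (gold ^ 3)⁻¹
lemma rr_pos : 0 < rr := inv_pos.2 (pow_pos goldPos 3)
lemma rr_lt_one : rr < 1 := by
  rw [rr, inv_lt_one_iff₀]; right; nlinarith [goldLB, goldCube]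
lemma rr_nonneg : 0 ≤ rr := rr_pos.le
lemma one_sub_rr : 1 - rr = 2 * gold / (2 * gold + 1) := by
  have h : (2 * gold + 1 : ℝ) ≠ 0 := by nlinarith [goldLB]
  rw [rr, goldCube]; field_simp; ring
lemma one_sub_rr_pos : 0 < 1 - rr := by linarith [rr_lt_one]

/-- the dimension -/
def dd : ℝ := Real.log 3 / Real.log (gold ^ 3)
lemma logR_pos : 0 < Real.log (gold ^ 3) := by
  apply Real.log_pos; nlinarith [goldLB, goldCube]
lemma dd_pos : 0 < dd := div_pos (Real.log_pos (by norm_num)) logR_pos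
/-- key identity : rr ^ dd = 1/3 (rpow) -/
lemma rr_rpow_dd : rr ^ dd = (3:ℝ)⁻¹ := by
  have hR : (0:ℝ) < gold ^ 3 := pow_pos goldPos 3
  rw [Real.rpow_def_of_pos rr_pos, rr, Real.log_inv]
  have hg : Real.log gold ≠ 0 := ne_of_gt (Real.log_pos (by nlinarith [goldLB]))
  have : -Real.log (gold ^ 3) * dd = -Real.log 3 := by
    rw [dd]; field_simp
  rw [this, Real.exp_neg, Real.exp_log (by norm_num)]
lemma rr_pow_rpow (n : ℕ) : (rr ^ n) ^ dd = ((3:ℝ)⁻¹) ^ n := by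
  rw [← Real.rpow_natCast rr n, ← Real.rpow_mul rr_nonneg, mul_comm,
    Real.rpow_mul rr_nonneg, rr_rpow_dd, Real.rpow_natCast]

/-- generic tail bound -/
lemma abs_tsum_le (c : ℕ → ℝ) (M q : ℝ) (hq0 : 0 ≤ q) (hq1 : q < 1) (n : ℕ)
    (h0 : ∀ k < n, c k = 0) (hb : ∀ k, |c k| ≤ M * q ^ k) :
    |∑' k, c k| ≤ M * q ^ n / (1 - q) := by
  have hM : 0 ≤ M := by
    have := (abs_nonneg (c 0)).trans (hb 0); simpa using this
  have hsum : Summable (fun k => M * q ^ k) :=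
    (summable_geometric_of_lt_one hq0 hq1).mul_left M
  have hc : Summable c := by
    apply Summable.of_norm_bounded hsum
    intro k; simpa [Real.norm_eq_abs] using hb k
  have key : ∑' k, c k = ∑' k, c (k + n) := by
    rw [← hc.sum_add_tsum_nat_add n, Finset.sum_eq_zero, zero_add]
    intro i hi; exact h0 i (Finset.mem_range.1 hi)
  rw [key]
  have hc' : Summable (fun k => c (k + n)) := (_root_.summable_nat_add_iff n).2 hc
  calc |∑' k, c (k + n)| ≤ ∑' k, |c (k + n)| := by
        simpa [Real.norm_eq_abs] using norm_tsum_le_tsum_norm (f := fun k => c (k+n))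
          (by simpa [Real.norm_eq_abs] using hc'.abs)
    _ ≤ ∑' k, M * q ^ (k + n) := by
        apply Summable.tsum_le_tsum (fun k => hb (k+n)) hc'.abs ((_root_.summable_nat_add_iff n).2 hsum)
    _ = M * q ^ n / (1 - q) := by
        have : ∀ k, M * q ^ (k + n) = (M * q ^ n) * q ^ k := by
          intro k; rw [pow_add]; ring
        simp_rw [this]
        rw [_root_.tsum_mul_left, tsum_geometric_of_lt_one hq0 hq1]
        field_simp

open Set

/-- the digits -/
def dig3 : Fin 3 → ℝ := ![0, 4 - 2 * gold, 2 * gold - 2]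
lemma dig3_mem (i : Fin 3) : dig3 i = 0 ∨ dig3 i = 4 - 2 * gold ∨ dig3 i = 2 * gold - 2 := by
  fin_cases i <;> simp [dig3]
lemma dig3_abs_le (i : Fin 3) : |dig3 i| ≤ 2 * gold - 2 := by
  have h1 := goldLB; have h2 := goldUB
  fin_cases i <;> simp [dig3, abs_le] <;> first | (constructor <;> nlinarith) | nlinarith
lemma dig3_sub_abs_le (i j : Fin 3) : |dig3 i - dig3 j| ≤ 2 * gold - 2 := by
  have h1 := goldLB; have h2 := goldUB
  fin_cases i <;> fin_cases j <;> simp [dig3, abs_le] <;> first | (constructor <;> nlinarith) | nlinarith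
lemma dig3_sep (i j : Fin 3) (h : i ≠ j) : 4 * gold - 6 ≤ |dig3 i - dig3 j| := by
  have h1 := goldLB; have h2 := goldUB
  fin_cases i <;> fin_cases j <;> (try exact absurd rfl h) <;> refine le_abs.2 ?_ <;>
    simp [dig3] <;> first | (left; nlinarith) | (right; nlinarith)

/-- the coding map -/
def Smap (a : ℕ → Fin 3) : ℝ := ∑' k, dig3 (a k) * rr ^ k

lemma Smap_summable (a : ℕ → Fin 3) : Summable (fun k => dig3 (a k) * rr ^ k) := by
  apply Summable.of_norm_bounded (g := fun k => (2 * gold - 2) * rr ^ k)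
    ((summable_geometric_of_lt_one rr_nonneg rr_lt_one).mul_left _)
  intro k
  rw [Real.norm_eq_abs, abs_mul, abs_of_nonneg (pow_nonneg rr_nonneg k)]
  exact mul_le_mul_of_nonneg_right (dig3_abs_le _) (pow_nonneg rr_nonneg k)

lemma two_gold_sub_two_pos : 0 < 2 * gold - 2 := by nlinarith [goldLB]

lemma ratio_id : (2 * gold - 2) / (1 - rr) = gold := by
  have h : (2 * gold + 1 : ℝ) ≠ 0 := by nlinarith [goldLB]
  have hg : gold ≠ 0 := ne_of_gt goldPos
  rw [one_sub_rr, div_div_eq_mul_div,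
    div_eq_iff (by nlinarith [goldLB] : (2*gold:ℝ) ≠ 0)]
  nlinarith [goldSq]

/-- tail estimate : sequences agreeing below n have close S values -/
lemma Smap_close (a b : ℕ → Fin 3) (n : ℕ) (h : ∀ k < n, a k = b k) :
    |Smap a - Smap b| ≤ gold * rr ^ n := by
  have hsub : Smap a - Smap b = ∑' k, (dig3 (a k) * rr ^ k - dig3 (b k) * rr ^ k) := by
    rw [Smap, Smap, ← (Smap_summable a).tsum_sub (Smap_summable b)]
  rw [hsub]
  have := abs_tsum_le (fun k => dig3 (a k) * rr ^ k - dig3 (b k) * rr ^ k)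
    (2 * gold - 2) rr rr_nonneg rr_lt_one n
    (fun k hk => by show dig3 (a k) * rr ^ k - dig3 (b k) * rr ^ k = 0; rw [h k hk]; ring)
    (fun k => by
      show |dig3 (a k) * rr ^ k - dig3 (b k) * rr ^ k| ≤ _
      rw [← sub_mul, abs_mul, abs_of_nonneg (pow_nonneg rr_nonneg k)]
      exact mul_le_mul_of_nonneg_right (dig3_sub_abs_le _ _) (pow_nonneg rr_nonneg k))
  calc _ ≤ (2*gold-2) * rr ^ n / (1 - rr) := this
    _ = ((2*gold-2)/(1-rr)) * rr ^ n := by ring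
    _ = gold * rr ^ n := by rw [ratio_id]

lemma gap_pos : 0 < 5 * gold - 8 := by nlinarith [goldLB]

/-- separation estimate -/
lemma Smap_sep (a b : ℕ → Fin 3) (n : ℕ) (hn : a n ≠ b n) (h : ∀ k < n, a k = b k) :
    (5 * gold - 8) * rr ^ n ≤ |Smap a - Smap b| := by
  set c : ℕ → ℝ := fun k => dig3 (a k) * rr ^ k - dig3 (b k) * rr ^ k with hc
  have hcb : ∀ k, |c k| ≤ (2 * gold - 2) * rr ^ k := fun k => by
    rw [hc]; simp only
    rw [← sub_mul, abs_mul, abs_of_nonneg (pow_nonneg rr_nonneg k)]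
    exact mul_le_mul_of_nonneg_right (dig3_sub_abs_le _ _) (pow_nonneg rr_nonneg k)
  have hcs : Summable c := by
    apply Summable.of_norm_bounded (g := fun k => (2 * gold - 2) * rr ^ k)
      ((summable_geometric_of_lt_one rr_nonneg rr_lt_one).mul_left _)
    intro k; simpa [Real.norm_eq_abs] using hcb k
  have hsub : Smap a - Smap b = ∑' k, c k := by
    rw [Smap, Smap, ← (Smap_summable a).tsum_sub (Smap_summable b)]
  -- split into first n+1 terms and tail
  have hsplit : ∑' k, c k = (∑ k ∈ Finset.range (n+1), c k) + ∑' k, c (k + (n+1)) :=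
    (hcs.sum_add_tsum_nat_add (n+1)).symm
  have hfirst : ∑ k ∈ Finset.range (n+1), c k = c n := by
    apply Finset.sum_eq_single_of_mem n (Finset.self_mem_range_succ n)
    intro k hk hkn
    have : k < n := lt_of_le_of_ne (Nat.lt_succ_iff.1 (Finset.mem_range.1 hk)) hkn
    simp only [hc, h k this]; ring
  -- tail bound
  have htail : |∑' k, c (k + (n+1))| ≤ (2 - gold) * rr ^ n := by
    have h2 : ∀ k < (n+1), (fun j => c (j + (n+1)) * 0) k = 0 := by intro k _; ring
    -- direct: use abs_tsum_le on shifted sequence with M = (2φ-2)*rr^(n+1)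
    have key := abs_tsum_le (fun k => c (k + (n+1))) ((2*gold-2) * rr ^ (n+1)) rr
      rr_nonneg rr_lt_one 0 (fun k hk => absurd hk (Nat.not_lt_zero k))
      (fun k => by
        calc |c (k + (n+1))| ≤ (2*gold-2) * rr ^ (k + (n+1)) := hcb _
          _ = (2*gold-2) * rr ^ (n+1) * rr ^ k := by rw [pow_add]; ring)
    calc |∑' k, c (k + (n+1))| ≤ (2*gold-2) * rr ^ (n+1) * rr ^ 0 / (1 - rr) := key
      _ = ((2*gold-2)/(1-rr)) * rr * rr ^ n := by rw [pow_succ]; ring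
      _ = gold * rr * rr ^ n := by rw [ratio_id]
      _ = (2 - gold) * rr ^ n := by
          have h : (2 * gold + 1 : ℝ) ≠ 0 := by nlinarith [goldLB]
          have : gold * rr = 2 - gold := by
            rw [rr, goldCube, mul_inv_eq_iff_eq_mul₀ h]; nlinarith [goldSq]
          rw [this]
  have hcn : (4 * gold - 6) * rr ^ n ≤ |c n| := by
    rw [hc]; simp only
    rw [← sub_mul, abs_mul, abs_of_nonneg (pow_nonneg rr_nonneg n)]
    exact mul_le_mul_of_nonneg_right (dig3_sep _ _ hn) (pow_nonneg rr_nonneg n)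
  have habs : |c n| - |∑' k, c (k + (n+1))| ≤ |Smap a - Smap b| := by
    rw [hsub, hsplit, hfirst]
    set T := ∑' k, c (k + (n+1)) with hT
    have h3 : |c n| ≤ |c n + T| + |T| := by
      have := abs_add_le (c n + T) (-T)
      simpa using this
    linarith
  calc (5 * gold - 8) * rr ^ n = (4*gold-6) * rr ^ n - (2 - gold) * rr ^ n := by ring
    _ ≤ |c n| - |∑' k, c (k + (n+1))| := sub_le_sub hcn htail
    _ ≤ _ := habs

/-- first disagreement + separation gives injectivity -/
lemma Smap_inj : Function.Injective Smap := by
  intro a b hab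
  by_contra hne
  have hex : ∃ n, a n ≠ b n := by
    by_contra h; push_neg at h; exact hne (funext h)
  classical
  let n := Nat.find hex
  have h1 : a n ≠ b n := Nat.find_spec hex
  have h2 : ∀ k < n, a k = b k := fun k hk => by
    have := Nat.find_min hex hk; simpa using this
  have := Smap_sep a b n h1 h2
  rw [hab, sub_self, abs_zero] at this
  nlinarith [gap_pos, pow_pos rr_pos n]


lemma pow_eq_rr (k : ℕ) : (gold ^ (3 * k))⁻¹ = rr ^ k := by
  rw [pow_mul, rr, inv_pow]

lemma cantorC_eq_range : cantorC = Set.range Smap := by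
  ext x
  constructor
  · rintro ⟨a, ha, rfl⟩
    classical
    refine ⟨fun k => if a k = 0 then 0 else if a k = 4 - 2 * gold then 1 else 2, ?_⟩
    rw [Smap]
    apply tsum_congr
    intro k
    rw [pow_eq_rr]
    congr 1
    rcases ha k with h | h | h
    · simp [h, dig3]
    · have h0 : (4 - 2 * gold : ℝ) ≠ 0 := by nlinarith [goldUB]
      simp [h, h0, dig3]
    · have h0 : (2 * gold - 2 : ℝ) ≠ 0 := by nlinarith [goldLB]
      have h1 : (2 * gold - 2 : ℝ) ≠ 4 - 2 * gold := by intro hh; nlinarith [goldLB]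
      simp [h, h0, h1, dig3]
  · rintro ⟨b, rfl⟩
    refine ⟨fun k => dig3 (b k), fun k => dig3_mem (b k), ?_⟩
    rw [Smap]
    apply tsum_congr
    intro k
    rw [pow_eq_rr]

/-- the base-3 value map -/
def gmap (a : ℕ → Fin 3) : ℝ := ∑' k, ((a k : ℕ) : ℝ) * ((3:ℝ)⁻¹) ^ (k + 1)

lemma gmap_summable (a : ℕ → Fin 3) :
    Summable (fun k => ((a k : ℕ) : ℝ) * ((3:ℝ)⁻¹) ^ (k + 1)) := by
  apply Summable.of_norm_bounded (g := fun k => (2/3) * ((3:ℝ)⁻¹) ^ k)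
    ((summable_geometric_of_lt_one (by norm_num) (by norm_num)).mul_left _)
  intro k
  rw [Real.norm_eq_abs, abs_mul, pow_succ']
  have h1 : ((a k : ℕ) : ℝ) ≤ 2 := by
    have := (a k).is_lt
    exact_mod_cast Nat.lt_succ_iff.1 this
  have h2 : (0:ℝ) ≤ ((a k : ℕ) : ℝ) := Nat.cast_nonneg _
  rw [abs_of_nonneg h2, abs_of_nonneg (by positivity)]
  calc ((a k : ℕ) : ℝ) * ((3:ℝ)⁻¹ * (3:ℝ)⁻¹ ^ k) ≤ 2 * ((3:ℝ)⁻¹ * (3:ℝ)⁻¹ ^ k) := by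
        apply mul_le_mul_of_nonneg_right h1 (by positivity)
    _ = (2/3) * ((3:ℝ)⁻¹) ^ k := by ring

lemma gmap_close (a b : ℕ → Fin 3) (n : ℕ) (h : ∀ k < n, a k = b k) :
    |gmap a - gmap b| ≤ ((3:ℝ)⁻¹) ^ n := by
  have hsub : gmap a - gmap b
      = ∑' k, (((a k : ℕ) : ℝ) * ((3:ℝ)⁻¹) ^ (k+1) - ((b k : ℕ) : ℝ) * ((3:ℝ)⁻¹) ^ (k+1)) := by
    rw [gmap, gmap, ← (gmap_summable a).tsum_sub (gmap_summable b)]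
  rw [hsub]
  have key := abs_tsum_le
    (fun k => ((a k : ℕ) : ℝ) * ((3:ℝ)⁻¹) ^ (k+1) - ((b k : ℕ) : ℝ) * ((3:ℝ)⁻¹) ^ (k+1))
    (2/3) (3:ℝ)⁻¹ (by norm_num) (by norm_num) n
    (fun k hk => by show _ - _ = (0:ℝ); rw [h k hk]; ring)
    (fun k => by
      show |((a k : ℕ) : ℝ) * ((3:ℝ)⁻¹) ^ (k+1) - ((b k : ℕ) : ℝ) * ((3:ℝ)⁻¹) ^ (k+1)| ≤ _
      rw [← sub_mul, abs_mul, pow_succ']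
      have h1 : |((a k : ℕ) : ℝ) - ((b k : ℕ) : ℝ)| ≤ 2 := by
        rw [abs_le]
        have ha := (a k).is_lt; have hb := (b k).is_lt
        have ha' : ((a k : ℕ) : ℝ) ≤ 2 := by exact_mod_cast Nat.lt_succ_iff.1 ha
        have hb' : ((b k : ℕ) : ℝ) ≤ 2 := by exact_mod_cast Nat.lt_succ_iff.1 hb
        constructor <;> [nlinarith [Nat.cast_nonneg (α := ℝ) (a k : ℕ), Nat.cast_nonneg (α := ℝ) (b k : ℕ)];
          nlinarith [Nat.cast_nonneg (α := ℝ) (a k : ℕ), Nat.cast_nonneg (α := ℝ) (b k : ℕ)]]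
      rw [abs_of_nonneg (by positivity : (0:ℝ) ≤ (3:ℝ)⁻¹ * (3:ℝ)⁻¹ ^ k)]
      calc |((a k : ℕ) : ℝ) - ((b k : ℕ) : ℝ)| * ((3:ℝ)⁻¹ * (3:ℝ)⁻¹ ^ k)
          ≤ 2 * ((3:ℝ)⁻¹ * (3:ℝ)⁻¹ ^ k) := mul_le_mul_of_nonneg_right h1 (by positivity)
        _ = (2/3) * ((3:ℝ)⁻¹) ^ k := by ring)
  calc _ ≤ (2/3) * ((3:ℝ)⁻¹) ^ n / (1 - (3:ℝ)⁻¹) := key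
    _ = ((3:ℝ)⁻¹) ^ n := by norm_num

/-- ternary digits of x ∈ [0,1) -/
lemma ternary_surj {x : ℝ} (hx0 : 0 ≤ x) (hx1 : x < 1) : ∃ a : ℕ → Fin 3, gmap a = x := by
  have hdig : ∀ n : ℕ, 0 ≤ ⌊(3:ℝ)^(n+1) * x⌋ - 3 * ⌊(3:ℝ)^n * x⌋ ∧
      ⌊(3:ℝ)^(n+1) * x⌋ - 3 * ⌊(3:ℝ)^n * x⌋ < 3 := by
    intro n
    set t : ℝ := (3:ℝ)^n * x with ht
    have h3t : (3:ℝ)^(n+1) * x = 3 * t := by rw [ht]; ring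
    have hfl : (⌊t⌋ : ℝ) ≤ t := Int.floor_le t
    have hfu : t < ⌊t⌋ + 1 := Int.lt_floor_add_one t
    constructor
    · rw [h3t, sub_nonneg]
      have : ((3 * ⌊t⌋ : ℤ) : ℝ) ≤ 3 * t := by push_cast; linarith
      exact_mod_cast Int.le_floor.2 this
    · rw [h3t, sub_lt_iff_lt_add]
      have : (3:ℝ) * t < ((3 * ⌊t⌋ + 3 : ℤ) : ℝ) := by push_cast; linarith
      have := Int.floor_lt.2 this
      omega
  refine ⟨fun n => ⟨(⌊(3:ℝ)^(n+1) * x⌋ - 3 * ⌊(3:ℝ)^n * x⌋).toNat, by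
    have := hdig n; omega⟩, ?_⟩
  set a : ℕ → Fin 3 := fun n => ⟨(⌊(3:ℝ)^(n+1) * x⌋ - 3 * ⌊(3:ℝ)^n * x⌋).toNat, by
    have := hdig n; omega⟩ with ha
  have hcast : ∀ n, ((a n : ℕ) : ℝ) = (⌊(3:ℝ)^(n+1) * x⌋ : ℝ) - 3 * (⌊(3:ℝ)^n * x⌋ : ℝ) := by
    intro n
    have h0 := (hdig n).1
    rw [ha]
    show ((((⌊(3:ℝ)^(n+1) * x⌋ - 3 * ⌊(3:ℝ)^n * x⌋).toNat) : ℕ) : ℝ) = _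
    rw [← Int.cast_natCast, Int.toNat_of_nonneg h0]
    push_cast; ring
  -- partial sums
  have hpart : ∀ n : ℕ, ∑ k ∈ Finset.range n, ((a k : ℕ) : ℝ) * ((3:ℝ)⁻¹) ^ (k+1)
      = (⌊(3:ℝ)^n * x⌋ : ℝ) / 3 ^ n := by
    intro n
    induction n with
    | zero =>
      simp only [Finset.range_zero, Finset.sum_empty, pow_zero, one_mul]
      rw [Int.floor_eq_zero_iff.2 ⟨hx0, hx1⟩]
      simp
    | succ n ih =>
      rw [Finset.sum_range_succ, ih, hcast n]
      have h3 : (3:ℝ) ^ n ≠ 0 := by positivity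
      have h3' : (3:ℝ) ^ (n+1) ≠ 0 := by positivity
      rw [inv_pow, pow_succ]
      field_simp
      ring
  -- convergence
  have hlim : Filter.Tendsto (fun n => ∑ k ∈ Finset.range n, ((a k : ℕ) : ℝ) * ((3:ℝ)⁻¹) ^ (k+1))
      Filter.atTop (nhds x) := by
    rw [show (fun n => ∑ k ∈ Finset.range n, ((a k : ℕ) : ℝ) * ((3:ℝ)⁻¹) ^ (k+1))
        = (fun n => (⌊(3:ℝ)^n * x⌋ : ℝ) / 3 ^ n) from funext hpart]
    rw [tendsto_iff_dist_tendsto_zero]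
    apply squeeze_zero (fun n => dist_nonneg) (g := fun n => ((3:ℝ)⁻¹)^n)
    · intro n
      rw [Real.dist_eq]
      have hfl : (⌊(3:ℝ)^n * x⌋ : ℝ) ≤ (3:ℝ)^n * x := Int.floor_le _
      have hfu : (3:ℝ)^n * x < ⌊(3:ℝ)^n * x⌋ + 1 := Int.lt_floor_add_one _
      have h3 : (0:ℝ) < (3:ℝ) ^ n := by positivity
      have h1 : (⌊(3:ℝ)^n * x⌋ : ℝ)/3^n - x = ((⌊(3:ℝ)^n * x⌋ : ℝ) - 3^n*x)/3^n := by
        field_simp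
      rw [h1, abs_div, abs_of_pos h3, div_le_iff₀ h3]
      have h2 : ((3:ℝ)⁻¹)^n * 3^n = 1 := by
        rw [← mul_pow]; norm_num
      rw [h2, abs_le]
      constructor <;> linarith
    · exact tendsto_pow_atTop_nhds_zero_of_lt_one (by norm_num) (by norm_num)
  have := (gmap_summable a).hasSum.tendsto_sum_nat
  exact tendsto_nhds_unique this hlim

def fmap : ℝ → ℝ := fun x => gmap (Function.invFun Smap x)

lemma fmap_Smap (a : ℕ → Fin 3) : fmap (Smap a) = gmap a := by
  rw [fmap, Function.leftInverse_invFun Smap_inj a]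

/-- core real Hölder estimate -/
lemma holder_real (a b : ℕ → Fin 3) :
    |gmap a - gmap b| ≤ (5*gold - 8) ^ (-dd) * |Smap a - Smap b| ^ dd := by
  rcases eq_or_ne a b with rfl | hne
  · simp only [sub_self, abs_zero]
    exact mul_nonneg (Real.rpow_nonneg gap_pos.le _) (Real.rpow_nonneg le_rfl _)
  classical
  have hex : ∃ n, a n ≠ b n := by
    by_contra h; push_neg at h; exact hne (funext h)
  set n := Nat.find hex with hn
  have h1 : a n ≠ b n := Nat.find_spec hex
  have h2 : ∀ k < n, a k = b k := fun k hk => by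
    have := Nat.find_min hex hk; simpa using this
  have hsep := Smap_sep a b n h1 h2
  have hg := gmap_close a b n h2
  set s := |Smap a - Smap b| with hs
  have hs0 : 0 ≤ s := abs_nonneg _
  have hrrn : rr ^ n ≤ s / (5*gold-8) := by
    rw [le_div_iff₀ gap_pos]; linarith
  calc |gmap a - gmap b| ≤ ((3:ℝ)⁻¹) ^ n := hg
    _ = (rr ^ n) ^ dd := (rr_pow_rpow n).symm
    _ ≤ (s / (5*gold-8)) ^ dd :=
        Real.rpow_le_rpow (pow_nonneg rr_nonneg n) hrrn dd_pos.le
    _ = (5*gold - 8) ^ (-dd) * s ^ dd := by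
        rw [Real.div_rpow hs0 gap_pos.le, Real.rpow_neg gap_pos.le]
        ring

def Kconst : ℝ≥0 := Real.toNNReal ((5*gold - 8) ^ (-dd))
def ddnn : ℝ≥0 := Real.toNNReal dd
lemma ddnn_coe : (ddnn : ℝ) = dd := Real.coe_toNNReal dd dd_pos.le
lemma ddnn_pos : 0 < ddnn := by
  rw [← NNReal.coe_pos, ddnn_coe]; exact dd_pos

lemma fmap_holder : HolderOnWith Kconst ddnn fmap cantorC := by
  intro x hx y hy
  rw [cantorC_eq_range] at hx hy
  set a := Function.invFun Smap x with hadef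
  set b := Function.invFun Smap y with hbdef
  have hax : Smap a = x := Function.invFun_eq hx
  have hby : Smap b = y := Function.invFun_eq hy
  have key := holder_real a b
  rw [hax, hby] at key
  have h1 : edist (fmap x) (fmap y) = ENNReal.ofReal |gmap a - gmap b| := by
    rw [edist_dist, Real.dist_eq, fmap, fmap, ← hadef, ← hbdef]
  rw [h1, ddnn_coe]
  have h2 : (Kconst : ℝ≥0∞) = ENNReal.ofReal ((5*gold - 8) ^ (-dd)) := rfl
  have h3 : edist x y ^ dd = ENNReal.ofReal (|x - y| ^ dd) := by
    rw [edist_dist, Real.dist_eq,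
      ← ENNReal.ofReal_rpow_of_nonneg (abs_nonneg _) dd_pos.le]
  rw [h2, h3, ← ENNReal.ofReal_mul (Real.rpow_nonneg gap_pos.le _)]
  exact ENNReal.ofReal_le_ofReal key

lemma lower_bound : ENNReal.ofReal dd ≤ dimH cantorC := by
  have himg : Set.Ico (0:ℝ) 1 ⊆ fmap '' cantorC := by
    rintro y ⟨hy0, hy1⟩
    obtain ⟨a, ha⟩ := ternary_surj hy0 hy1
    exact ⟨Smap a, by rw [cantorC_eq_range]; exact ⟨a, rfl⟩, by rw [fmap_Smap, ha]⟩
  have h1 : dimH (Set.Ico (0:ℝ) 1) = 1 := by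
    rw [Real.dimH_of_nonempty_interior (E := ℝ)]
    · simp
    · rw [interior_Ico]
      exact ⟨1/2, by norm_num, by norm_num⟩
  have h2 : (1:ℝ≥0∞) ≤ dimH (fmap '' cantorC) := h1 ▸ dimH_mono himg
  have h3 := fmap_holder.dimH_image_le ddnn_pos
  have h4 : (1:ℝ≥0∞) ≤ dimH cantorC / ddnn := le_trans h2 h3
  have h5 : (ddnn : ℝ≥0∞) ≤ dimH cantorC := by
    have := (ENNReal.le_div_iff_mul_le (Or.inl (by exact_mod_cast ddnn_pos.ne'))
      (Or.inl ENNReal.coe_ne_top)).1 h4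
    simpa using this
  have : (ddnn : ℝ≥0∞) = ENNReal.ofReal dd := rfl
  rwa [this] at h5

open MeasureTheory Filter

lemma upper_bound : dimH cantorC ≤ ENNReal.ofReal dd := by
  have hmeas : μH[(ddnn : ℝ)] cantorC ≠ ⊤ := by
    rw [ddnn_coe]
    -- covering argument
    set t : ∀ n : ℕ, (Fin n → Fin 3) → Set ℝ :=
      fun n w => Smap '' {a : ℕ → Fin 3 | ∀ k : Fin n, a k = w k} with ht
    set r : ℕ → ℝ≥0∞ := fun n => ENNReal.ofReal (gold * rr ^ n) with hr
    have hr0 : Tendsto r atTop (nhds 0) := by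
      have h1 : Tendsto (fun n : ℕ => gold * rr ^ n) atTop (nhds 0) := by
        have := (tendsto_pow_atTop_nhds_zero_of_lt_one rr_nonneg rr_lt_one).const_mul gold
        simpa using this
      have h2 := (ENNReal.continuous_ofReal.tendsto 0).comp h1
      simpa [hr, Function.comp_def] using h2
    have hdiam : ∀ n : ℕ, ∀ w : Fin n → Fin 3, EMetric.diam (t n w) ≤ r n := by
      intro n w
      apply EMetric.diam_le
      rintro x ⟨a, ha, rfl⟩ y ⟨b, hb, rfl⟩
      rw [edist_dist, Real.dist_eq, hr]
      apply ENNReal.ofReal_le_ofReal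
      apply Smap_close
      intro k hk
      rw [ha ⟨k, hk⟩, hb ⟨k, hk⟩]
    have hcover : ∀ n : ℕ, cantorC ⊆ ⋃ w : Fin n → Fin 3, t n w := by
      intro n x hx
      rw [cantorC_eq_range] at hx
      obtain ⟨a, rfl⟩ := hx
      exact Set.mem_iUnion.2 ⟨fun i => a i, a, fun k => rfl, rfl⟩
    have key := MeasureTheory.Measure.hausdorffMeasure_le_liminf_sum dd cantorC r hr0 t
      (Eventually.of_forall hdiam) (Eventually.of_forall hcover)
    have hbound : ∀ n : ℕ, ∑ w : Fin n → Fin 3, EMetric.diam (t n w) ^ dd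
        ≤ ENNReal.ofReal (gold ^ dd) := by
      intro n
      have hterm : ∀ w : Fin n → Fin 3, EMetric.diam (t n w) ^ dd
          ≤ ENNReal.ofReal ((gold * rr ^ n) ^ dd) := by
        intro w
        calc EMetric.diam (t n w) ^ dd ≤ (r n) ^ dd :=
              ENNReal.rpow_le_rpow (hdiam n w) dd_pos.le
          _ = ENNReal.ofReal ((gold * rr ^ n) ^ dd) := by
              rw [hr, ← ENNReal.ofReal_rpow_of_nonneg (mul_nonneg goldPos.le (pow_nonneg rr_nonneg n)) dd_pos.le]
      calc ∑ w : Fin n → Fin 3, EMetric.diam (t n w) ^ dd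
          ≤ ∑ _w : Fin n → Fin 3, ENNReal.ofReal ((gold * rr ^ n) ^ dd) :=
            Finset.sum_le_sum (fun w _ => hterm w)
        _ = (3 ^ n : ℕ) * ENNReal.ofReal ((gold * rr ^ n) ^ dd) := by
            rw [Finset.sum_const, Finset.card_univ]
            have : Fintype.card (Fin n → Fin 3) = 3 ^ n := by
              rw [Fintype.card_fun]; simp
            rw [this, nsmul_eq_mul]
        _ = ENNReal.ofReal ((3:ℝ) ^ n * (gold * rr ^ n) ^ dd) := by
            rw [ENNReal.ofReal_mul (by positivity)]
            congr 1
            rw [← ENNReal.ofReal_natCast (3^n)]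
            norm_num
        _ = ENNReal.ofReal (gold ^ dd) := by
            congr 1
            rw [Real.mul_rpow goldPos.le (pow_nonneg rr_nonneg n), rr_pow_rpow]
            rw [inv_pow]
            field_simp
    have : μH[dd] cantorC ≤ ENNReal.ofReal (gold ^ dd) := by
      apply le_trans key
      apply le_trans (Filter.liminf_le_liminf (Eventually.of_forall hbound))
      rw [Filter.liminf_const]
    exact ne_top_of_le_ne_top ENNReal.ofReal_ne_top this
  have := dimH_le_of_hausdorffMeasure_ne_top hmeas
  have heq : (ddnn : ℝ≥0∞) = ENNReal.ofReal dd := rfl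
  rwa [heq] at this


/-- The Hausdorff dimension of the Cantor set `C` is `log 3 / log φ³`. -/
theorem cantorC_dimH :
    dimH cantorC = ENNReal.ofReal (Real.log 3 / Real.log (gold ^ 3)) := by
  have h : Real.log 3 / Real.log (gold ^ 3) = dd := rfl
  rw [h]
  exact le_antisymm upper_bound lower_bound
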